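/- The sample median satisfies the partition property: for any finite multiset of reals S partitioned into nonempty multisets S_1, …, S_J, min_j median(S_j) ≤ median(S) ≤ max_j median(S_j), where for even cardinality N the median is defined as the average of the N/2-th and (1+N/2)-th order statistics. -/

import Mathlib

open scoped BigOperators

/-- The sample median of a finite multiset of reals: the middle order statistic
for odd cardinality, and the average of the two middle order statistics
(the `N/2`-th and `(1+N/2)`-th, 1-indexed) for even cardinality `N`. -/
noncomputable def sampleMedian (s : Multiset ℝ) : ℝ :=
  let l := s.sort (· ≤ ·)
  if l.length % 2 = 1 then l.getD (l.length / 2) 0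
  else (l.getD (l.length / 2 - 1) 0 + l.getD (l.length / 2) 0) / 2

namespace SampleMedianAux

/-- In a sorted list, the `i`-th element is `≤ t` iff `i` is below the count of
elements `≤ t`. -/
lemma sorted_getD_le_iff : ∀ (l : List ℝ), l.Pairwise (· ≤ ·) → ∀ (t : ℝ) (i : ℕ),
    i < l.length → (l.getD i 0 ≤ t ↔ i < l.countP (fun x => decide (x ≤ t))) := by
  intro l
  induction l with
  | nil => intro _ t i hi; simp at hi
  | cons a l ih =>
    intro hl t i hi
    rw [List.pairwise_cons] at hl
    obtain ⟨ha, hl⟩ := hl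
    rw [List.countP_cons]
    cases i with
    | zero =>
      simp only [List.getD_cons_zero]
      constructor
      · intro h; simp [h]
      · intro h
        by_contra hat
        push_neg at hat
        have h0 : l.countP (fun x => decide (x ≤ t)) = 0 := by
          rw [List.countP_eq_zero]
          intro x hx
          simp only [decide_eq_true_eq, not_le]
          exact lt_of_lt_of_le hat (ha x hx)
        rw [h0] at h
        simp only [not_le.mpr hat] at h
        simp at h
    | succ i =>
      rw [List.getD_cons_succ]
      simp only [List.length_cons, Nat.succ_lt_succ_iff] at hi
      rw [ih hl t i hi]
      by_cases hat : a ≤ t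
      · simp [hat]
      · have h0 : l.countP (fun x => decide (x ≤ t)) = 0 := by
          rw [List.countP_eq_zero]
          intro x hx
          simp only [decide_eq_true_eq, not_le]
          exact lt_of_lt_of_le (not_le.mp hat) (ha x hx)
        simp [hat, h0]

lemma sorted_getD_mono (l : List ℝ) (hl : l.Pairwise (· ≤ ·)) {i j : ℕ} (hij : i ≤ j)
    (hj : j < l.length) : l.getD i 0 ≤ l.getD j 0 := by
  have hi : i < l.length := lt_of_le_of_lt hij hj
  rw [List.getD_eq_getElem l 0 hi, List.getD_eq_getElem l 0 hj]
  rcases eq_or_lt_of_le hij with rfl | h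
  · exact le_refl _
  · exact List.pairwise_iff_get.mp hl ⟨i, hi⟩ ⟨j, hj⟩ h

lemma mem_getD (l : List ℝ) {z : ℝ} (hz : z ∈ l) : ∃ i, i < l.length ∧ l.getD i 0 = z := by
  obtain ⟨n, hn⟩ := List.mem_iff_get.mp hz
  exact ⟨n, n.isLt, by rw [List.getD_eq_getElem l 0 n.isLt]; exact hn⟩

lemma getD_mem (l : List ℝ) {i : ℕ} (hi : i < l.length) : l.getD i 0 ∈ l := by
  rw [List.getD_eq_getElem l 0 hi]; exact List.getElem_mem hi

lemma countP_sort (s : Multiset ℝ) (t : ℝ) :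
    (s.sort (· ≤ ·)).countP (fun x => decide (x ≤ t)) = s.countP (fun x => x ≤ t) := by
  rw [← Multiset.coe_countP, Multiset.sort_eq]

lemma countP_finsum {ι : Type*} (t : Finset ι) (f : ι → Multiset ℝ) (p : ℝ → Prop)
    [DecidablePred p] : (∑ j ∈ t, f j).countP p = ∑ j ∈ t, (f j).countP p := by
  classical
  induction t using Finset.induction_on with
  | empty => simp
  | insert _ _ h ih => rw [Finset.sum_insert h, Finset.sum_insert h, Multiset.countP_add, ih]

lemma card_finsum {ι : Type*} (t : Finset ι) (f : ι → Multiset ℝ) :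
    Multiset.card (∑ j ∈ t, f j) = ∑ j ∈ t, Multiset.card (f j) := by
  classical
  induction t using Finset.induction_on with
  | empty => simp
  | insert _ _ h ih => rw [Finset.sum_insert h, Finset.sum_insert h, Multiset.card_add, ih]

/-- If the median of a nonempty multiset is `≤ m`, at least "half rounded up"
of its elements are `≤ m`. -/
lemma two_cnt_ge (s : Multiset ℝ) (hs : s ≠ 0) (m : ℝ) (h : sampleMedian s ≤ m) :
    Multiset.card s + Multiset.card s % 2 ≤ 2 * s.countP (fun x => x ≤ m) := by
  have hsor := Multiset.pairwise_sort s (· ≤ ·)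
  have hlen : (s.sort (· ≤ ·)).length = Multiset.card s := Multiset.length_sort _
  have hpos : 0 < Multiset.card s := Multiset.card_pos.mpr hs
  have hcl := countP_sort s m
  simp only [sampleMedian] at h
  set l := s.sort (· ≤ ·) with hldef
  by_cases hpar : l.length % 2 = 1
  · rw [if_pos hpar] at h
    have := (sorted_getD_le_iff l hsor m (l.length / 2) (by omega)).mp h
    omega
  · rw [if_neg hpar] at h
    have hlen2 : 2 ≤ l.length := by omega
    have hmono : l.getD (l.length / 2 - 1) 0 ≤ l.getD (l.length / 2) 0 :=
      sorted_getD_mono l hsor (by omega) (by omega)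
    have h2 : l.getD (l.length / 2 - 1) 0 ≤ m := by linarith
    have := (sorted_getD_le_iff l hsor m (l.length / 2 - 1) (by omega)).mp h2
    omega

/-- Upper-bound half of the partition property. -/
lemma key (S : Multiset ℝ) (J : ℕ) (P : Fin (J + 1) → Multiset ℝ)
    (hne : ∀ j, P j ≠ 0) (hun : S = ∑ j : Fin (J + 1), P j) :
    sampleMedian S ≤ Finset.univ.sup' Finset.univ_nonempty (fun j => sampleMedian (P j)) := by
  set m := Finset.univ.sup' Finset.univ_nonempty (fun j => sampleMedian (P j)) with hm
  have hjm : ∀ j, sampleMedian (P j) ≤ m := fun j => by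
    rw [hm]; exact Finset.le_sup' (fun j => sampleMedian (P j)) (Finset.mem_univ j)
  have hcnt : ∀ j, Multiset.card (P j) + Multiset.card (P j) % 2
      ≤ 2 * (P j).countP (fun x => x ≤ m) := fun j => two_cnt_ge _ (hne j) m (hjm j)
  have hcardS : Multiset.card S = ∑ j, Multiset.card (P j) := by
    rw [hun]; exact card_finsum _ _
  have hcntS : S.countP (fun x => x ≤ m) = ∑ j, (P j).countP (fun x => x ≤ m) := by
    rw [hun]; exact countP_finsum _ _ _
  have hsor := Multiset.pairwise_sort S (· ≤ ·)
  have hlen : (S.sort (· ≤ ·)).length = Multiset.card S := Multiset.length_sort _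
  have hSne : S ≠ 0 := by
    rw [hun]
    intro h0
    exact hne 0 (by
      have := (Finset.sum_eq_zero_iff (s := Finset.univ) (f := P)).mp h0
      exact this 0 (Finset.mem_univ 0))
  have hpos : 0 < Multiset.card S := Multiset.card_pos.mpr hSne
  have hcS : Multiset.card S ≤ 2 * S.countP (fun x => x ≤ m) := by
    rw [hcardS, hcntS, Finset.mul_sum]
    exact Finset.sum_le_sum fun j _ => by have := hcnt j; omega
  set N := Multiset.card S with hN
  set c := S.countP (fun x => x ≤ m) with hc
  simp only [sampleMedian]
  set l := S.sort (· ≤ ·) with hldef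
  have hcountl : l.countP (fun x => decide (x ≤ m)) = c := countP_sort S m
  by_cases hpar : l.length % 2 = 1
  · rw [if_pos hpar]
    rw [sorted_getD_le_iff l hsor m (l.length / 2) (by omega), hcountl]
    omega
  · rw [if_neg hpar]
    have hlen2 : 2 ≤ l.length := by omega
    have hx : l.getD (l.length / 2 - 1) 0 ≤ m := by
      rw [sorted_getD_le_iff l hsor m (l.length / 2 - 1) (by omega), hcountl]
      omega
    by_cases hbig : N / 2 < c
    · have hy : l.getD (l.length / 2) 0 ≤ m := by
        rw [sorted_getD_le_iff l hsor m (l.length / 2) (by omega), hcountl]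
        omega
      linarith
    · -- hard case: c = N / 2
      have hceq : 2 * c = N := by omega
      -- equality is forced in every part
      have hle2 : ∀ j ∈ Finset.univ, Multiset.card (P j) + Multiset.card (P j) % 2
          ≤ 2 * (P j).countP (fun x => x ≤ m) := fun j _ => hcnt j
      have hsum_eq : ∑ j, (Multiset.card (P j) + Multiset.card (P j) % 2)
          = ∑ j, 2 * (P j).countP (fun x => x ≤ m) := by
        have h1 : ∑ j, 2 * (P j).countP (fun x => x ≤ m) = N := by
          rw [← Finset.mul_sum, ← hcntS, hceq]
        have h2 : (∑ j, (Multiset.card (P j) + Multiset.card (P j) % 2)) ≤ N := by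
          rw [← h1]; exact Finset.sum_le_sum hle2
        have h3 : N ≤ ∑ j, (Multiset.card (P j) + Multiset.card (P j) % 2) := by
          rw [hcardS]; exact Finset.sum_le_sum fun j _ => by omega
        omega
      have hforced := (Finset.sum_eq_sum_iff_of_le hle2).mp hsum_eq
      have hparts : ∀ j, Multiset.card (P j) % 2 = 0 ∧
          2 * (P j).countP (fun x => x ≤ m) = Multiset.card (P j) := by
        intro j
        -- from the sum equality: Σ n_j % 2 = 0
        have hmod : ∑ j, Multiset.card (P j) % 2 = 0 := by
          have := hsum_eq
          rw [Finset.sum_add_distrib] at this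
          have h1 : ∑ j, 2 * (P j).countP (fun x => x ≤ m) = N := by
            rw [← Finset.mul_sum, ← hcntS, hceq]
          rw [h1, ← hcardS] at this
          omega
        have hmodj : Multiset.card (P j) % 2 = 0 :=
          (Finset.sum_eq_zero_iff.mp hmod) j (Finset.mem_univ j)
        have := hforced j (Finset.mem_univ j)
        omega
      -- the upper middle element of S is > m
      have hy_gt : m < l.getD (l.length / 2) 0 := by
        by_contra hyg
        push_neg at hyg
        rw [sorted_getD_le_iff l hsor m (l.length / 2) (by omega), hcountl] at hyg
        omega
      -- locate the part containing x
      set x := l.getD (l.length / 2 - 1) 0 with hxdef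
      have hxS : x ∈ S := by
        have := getD_mem l (i := l.length / 2 - 1) (by omega)
        rwa [← Multiset.mem_sort (· ≤ ·)]
      obtain ⟨j0, -, hj0⟩ := Multiset.mem_sum.mp (by rwa [hun] at hxS)
      set l0 := (P j0).sort (· ≤ ·) with hl0def
      have hsor0 := Multiset.pairwise_sort (P j0) (· ≤ ·)
      have hlen0 : l0.length = Multiset.card (P j0) := Multiset.length_sort _
      have hcount0 : l0.countP (fun x => decide (x ≤ m)) = (P j0).countP (fun x => x ≤ m) :=
        countP_sort _ m
      have hn0pos : 0 < Multiset.card (P j0) := Multiset.card_pos.mpr (hne j0)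
      obtain ⟨hmod0, hc0⟩ := hparts j0
      have hn0two : 2 ≤ l0.length := by omega
      set a := l0.getD (l0.length / 2 - 1) 0 with hadef
      set b := l0.getD (l0.length / 2) 0 with hbdef
      -- x ≤ a
      have hxa : x ≤ a := by
        obtain ⟨i, hi, hieq⟩ := mem_getD l0 (by rwa [Multiset.mem_sort])
        have : i < l0.countP (fun x => decide (x ≤ m)) := by
          rw [← hieq] at hx
          exact (sorted_getD_le_iff l0 hsor0 m i hi).mp hx
        rw [hcount0] at this
        rw [← hieq]
        exact sorted_getD_mono l0 hsor0 (by omega) (by omega)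
      -- b > m, b ∈ S, so y ≤ b
      have hb_gt : m < b := by
        by_contra hgb
        push_neg at hgb
        rw [hbdef, sorted_getD_le_iff l0 hsor0 m (l0.length / 2) (by omega), hcount0] at hgb
        omega
      have hbS : b ∈ S := by
        rw [hun]
        exact Multiset.mem_sum.mpr ⟨j0, Finset.mem_univ j0, by
          rw [← Multiset.mem_sort (· ≤ ·)]
          exact getD_mem l0 (by omega)⟩
      have hyb : l.getD (l.length / 2) 0 ≤ b := by
        obtain ⟨k, hk, hkeq⟩ := mem_getD l (by rwa [← Multiset.mem_sort (· ≤ ·)] at hbS)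
        have hkge : ¬ (k < l.countP (fun x => decide (x ≤ m))) := by
          intro hlt
          have := (sorted_getD_le_iff l hsor m k hk).mpr hlt
          rw [hkeq] at this
          linarith
        rw [hcountl] at hkge
        rw [← hkeq]
        exact sorted_getD_mono l hsor (by omega) hk
      -- median of P j0 is (a+b)/2 ≤ m
      have hmed0 : (a + b) / 2 ≤ m := by
        have := hjm j0
        simp only [sampleMedian] at this
        rw [← hl0def, if_neg (by omega)] at this
        exact this
      linarith

/-- Median negates under pointwise negation. -/
lemma sampleMedian_neg (s : Multiset ℝ) :
    sampleMedian (s.map (fun x => -x)) = - sampleMedian s := by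
  have hsor := Multiset.pairwise_sort s (· ≤ ·)
  set l := s.sort (· ≤ ·) with hldef
  clear_value l
  have h1 : (s.map (fun x => -x)).sort (· ≤ ·) = (l.map (fun x => -x)).reverse := by
    refine (fun h a b => List.Perm.eq_of_pairwise' (r := (· ≤ ·)) a b h) ?_ ?_ ?_
    · rw [← Multiset.coe_eq_coe, Multiset.sort_eq, ← Multiset.sort_eq s (· ≤ ·), ← hldef]
      rw [show ((l.map fun x => -x).reverse : Multiset ℝ) = ((l.map fun x => -x) : List ℝ) from
        Multiset.coe_eq_coe.mpr (List.reverse_perm _)]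
      rw [Multiset.map_coe]
    · exact Multiset.pairwise_sort _ _
    · rw [List.pairwise_reverse]
      exact List.Pairwise.map _ (fun a b hab => neg_le_neg hab) hsor
  simp only [sampleMedian]
  rw [← hldef, h1]
  rw [List.length_reverse, List.length_map]
  rcases Nat.eq_zero_or_pos l.length with h0 | hpos
  · have : l = [] := List.length_eq_zero_iff.mp h0
    subst this
    simp
  by_cases hpar : l.length % 2 = 1
  · rw [if_pos hpar, if_pos hpar]
    have hlt : l.length / 2 < (l.map (fun x => -x)).reverse.length := by
      rw [List.length_reverse, List.length_map]; omega
    rw [List.getD_eq_getElem _ 0 hlt, List.getElem_reverse, List.getElem_map,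
      List.getD_eq_getElem l 0 (by omega)]
    congr 2
    rw [List.length_map]
    omega
  · rw [if_neg hpar, if_neg hpar]
    have hlen2 : 2 ≤ l.length := by omega
    have hlt1 : l.length / 2 - 1 < (l.map (fun x => -x)).reverse.length := by
      rw [List.length_reverse, List.length_map]; omega
    have hlt2 : l.length / 2 < (l.map (fun x => -x)).reverse.length := by
      rw [List.length_reverse, List.length_map]; omega
    rw [List.getD_eq_getElem _ 0 hlt1, List.getD_eq_getElem _ 0 hlt2,
      List.getElem_reverse, List.getElem_reverse, List.getElem_map, List.getElem_map,
      List.getD_eq_getElem l 0 (show l.length / 2 - 1 < l.length by omega),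
      List.getD_eq_getElem l 0 (show l.length / 2 < l.length by omega)]
    have e1 : (l.map fun x => -x).length - 1 - (l.length / 2 - 1) = l.length / 2 := by
      rw [List.length_map]; omega
    have e2 : (l.map fun x => -x).length - 1 - (l.length / 2) = l.length / 2 - 1 := by
      rw [List.length_map]; omega
    simp only [e1, e2]
    ring

end SampleMedianAux

open SampleMedianAux in
/-- Partition property of the sample median: for a finite multiset `S`
partitioned into nonempty multisets `S_0, …, S_J`,
`min_j median(S_j) ≤ median(S) ≤ max_j median(S_j)`. -/
theorem sampleMedian_partition_property
    (S : Multiset ℝ) (J : ℕ) (P : Fin (J + 1) → Multiset ℝ)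
    (hne : ∀ j, P j ≠ 0)
    (hun : S = ∑ j : Fin (J + 1), P j) :
    Finset.univ.inf' Finset.univ_nonempty (fun j => sampleMedian (P j)) ≤ sampleMedian S ∧
      sampleMedian S ≤ Finset.univ.sup' Finset.univ_nonempty (fun j => sampleMedian (P j)) := by
  constructor
  · have hkey := key (S.map (fun x => -x)) J (fun j => (P j).map (fun x => -x))
      (fun j => by simpa [Multiset.map_eq_zero] using hne j)
      (by rw [hun]; exact map_sum (Multiset.mapAddMonoidHom (fun x : ℝ => -x)) _ _)
    rw [sampleMedian_neg] at hkey
    obtain ⟨j0, -, hj0⟩ := Finset.exists_mem_eq_sup' Finset.univ_nonempty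
      (fun j => sampleMedian ((P j).map (fun x => -x)))
    rw [hj0, sampleMedian_neg] at hkey
    calc Finset.univ.inf' Finset.univ_nonempty (fun j => sampleMedian (P j))
        ≤ sampleMedian (P j0) := Finset.inf'_le _ (Finset.mem_univ j0)
      _ ≤ sampleMedian S := by linarith
  · exact key S J P hne hun
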